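/- Let K = ℚ(t) be the field of rational functions in one variable over ℚ, and let E be the elliptic curve over K given by the Weierstrass equation y² = x³ + (t²+2)x² + x (the extremal rational elliptic surface X_{8211}). Then the point P = (−1, t) lies on E, the doubling of P in the group of K-points equals the 2-torsion point (0, 0), and P has exact order 4: 4·P = O while 2·P ≠ O, where O is the point at infinity. -/

import Mathlib

open WeierstrassCurve

/-- The extremal rational elliptic surface `X₈₂₁₁`, given as the elliptic curve
`y² = x³ + (t² + 2)x² + x` over `K = ℚ(t)`. -/
noncomputable def X8211 : WeierstrassCurve.Affine (RatFunc ℚ) :=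
  { a₁ := 0, a₂ := RatFunc.X ^ 2 + 2, a₃ := 0, a₄ := 1, a₆ := 0 }

lemma some_congr {F : Type*} [Field F] {W : WeierstrassCurve.Affine F} {x y x' y' : F}
    (hx : x = x') (hy : y = y') (h : W.Nonsingular x y) (h' : W.Nonsingular x' y') :
    Affine.Point.some _ _ h = Affine.Point.some _ _ h' := by
  subst hx; subst hy; rfl

lemma X8211_two : (2 : RatFunc ℚ) ≠ 0 := by
  have h : ((2 : Polynomial ℚ) : RatFunc ℚ) ≠ 0 := RatFunc.algebraMap_ne_zero (by norm_num)
  rwa [show ((2 : Polynomial ℚ) : RatFunc ℚ) = 2 from map_ofNat _ 2] at h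

lemma X8211_hX : (RatFunc.X : RatFunc ℚ) ≠ 0 := RatFunc.X_ne_zero

lemma X8211_hy : RatFunc.X ≠ X8211.negY (-1) RatFunc.X := by
  simp only [Affine.negY, X8211]
  intro h
  have h2 : (2 : RatFunc ℚ) * RatFunc.X = 0 := by linear_combination h
  exact X8211_hX ((mul_eq_zero.mp h2).resolve_left X8211_two)

open Classical in
/-- The point `P = (-1, t)` lies on `X₈₂₁₁`, its double is the `2`-torsion point
`(0, 0)`, and it has exact order `4` in the Mordell–Weil group. -/
theorem X8211_point_order_four :
    X8211.Equation (-1) RatFunc.X ∧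
    ∃ (hP : X8211.Nonsingular (-1) RatFunc.X) (h0 : X8211.Nonsingular 0 0),
      2 • Affine.Point.some _ _ hP = Affine.Point.some _ _ h0 ∧
      4 • Affine.Point.some _ _ hP = 0 ∧
      2 • Affine.Point.some _ _ hP ≠ 0 := by
  have heq : X8211.Equation (-1) RatFunc.X := by
    rw [Affine.equation_iff]; simp only [X8211]; ring
  have hP : X8211.Nonsingular (-1) RatFunc.X := by
    rw [Affine.nonsingular_iff]
    exact ⟨heq, Or.inr X8211_hy⟩
  have h0 : X8211.Nonsingular 0 0 := by
    rw [Affine.nonsingular_iff]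
    constructor
    · rw [Affine.equation_iff]; simp [X8211]
    · left
      simp only [X8211]
      norm_num
  have hs : X8211.slope (-1) (-1) RatFunc.X RatFunc.X = -RatFunc.X := by
    rw [Affine.slope_of_Y_ne rfl X8211_hy]
    simp only [Affine.negY, X8211]
    rw [div_eq_iff (by
      intro h
      have h2 : (2 : RatFunc ℚ) * RatFunc.X = 0 := by linear_combination h
      exact X8211_hX ((mul_eq_zero.mp h2).resolve_left X8211_two))]
    ring
  have hxadd : X8211.addX (-1) (-1) (X8211.slope (-1) (-1) RatFunc.X RatFunc.X) = 0 := by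
    rw [hs]; simp only [Affine.addX, X8211]; ring
  have hyadd : X8211.addY (-1) (-1) RatFunc.X (X8211.slope (-1) (-1) RatFunc.X RatFunc.X) = 0 := by
    rw [Affine.addY, Affine.negAddY, hxadd, hs]
    simp only [Affine.negY, X8211]; ring
  have h2 : 2 • Affine.Point.some _ _ hP = Affine.Point.some _ _ h0 := by
    rw [two_smul, Affine.Point.add_self_of_Y_ne X8211_hy]
    exact some_congr hxadd hyadd _ _
  refine ⟨heq, hP, h0, h2, ?_, ?_⟩
  · have : (4 : ℕ) • Affine.Point.some _ _ hP = 2 • (2 • Affine.Point.some _ _ hP) := by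
      rw [smul_smul]; norm_num
    rw [this, h2, two_smul]
    exact Affine.Point.add_self_of_Y_eq (by simp [Affine.negY, X8211])
  · rw [h2]
    exact Affine.Point.some_ne_zero h0
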